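/- For every natural number x ≥ 1 and every k ≥ 1, star^k(x) + 1 = 1 + x · ∏_{j=0}^{k-1} (star^j(x) + 1). -/

import Mathlib

def star (x : ℕ) : ℕ := x * (x + 1)

theorem sylvester_product_formula (x k : ℕ) (hx : 1 ≤ x) (hk : 1 ≤ k) :
    star^[k] x + 1 = 1 + x * ∏ j ∈ Finset.range k, (star^[j] x + 1) := by
  induction k with
  | zero => omega
  | succ n ih =>
    rcases Nat.eq_or_lt_of_le hk with h | h
    · obtain rfl : n = 0 := by omega
      simp [_root_.star, Function.iterate_one]
      ring
    · have hn : 1 ≤ n := by omega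
      have ihn := ih hn
      rw [Finset.prod_range_succ, Function.iterate_succ_apply']
      have : x * ∏ j ∈ Finset.range n, (_root_.star^[j] x + 1) = _root_.star^[n] x := by omega
      rw [← mul_assoc, this, _root_.star]
      ring
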